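/- (Geometric decay of the resonance-avoidance bounds.) Define γ^{(J)}_{k,I} for J ≥ 1, 1 ≤ k ≤ J, I ∈ Z by: γ^{(J)}_{k,I} = 1 for I ≤ 0; γ^{(J)}_{1,I} = 0 for I ≥ 1; and recursively γ^{(J)}_{k+1,I} = (1 - c)^{√I - 1} + I^{1 + (k-1)/2} γ^{(J)}_{k, [√I] - k + 1} for 1 ≤ k < J and I ≥ 1, where c ∈ (0,1) is a constant. Then for each 1 ≤ k ≤ J, limsup_{I → ∞} I^{-1/2^{k-1}} log γ^{(J)}_{k,I} ≤ log(1 - c) < 0. -/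

import Mathlib

open Filter

noncomputable section

/-- The recursively defined quantities `γ^{(J)}_{k,I}` of (A.39): here `gam c j I`
corresponds to `γ^{(J)}_{j+1,I}` (the recursion does not depend on `J`).
`gam c 0 I = γ_{1,I}` equals `1` for `I ≤ 0` and `0` for `I ≥ 1`, and
`γ_{k+1,I} = (1-c)^{√I - 1} + I^{1+(k-1)/2} γ_{k, [√I]-k+1}` for `I ≥ 1`. -/
def gam (c : ℝ) : ℕ → ℤ → ℝ
  | 0, I => if I ≤ 0 then 1 else 0
  | j + 1, I => if I ≤ 0 then 1 else
      (1 - c) ^ (Real.sqrt (I : ℝ) - 1) +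
        ((I : ℝ)) ^ ((1 : ℝ) + (j : ℝ) / 2) * gam c j (⌊Real.sqrt (I : ℝ)⌋ - j)

/-- Real version of subadditivity of `rpow` with exponent in `[0,1]`. -/
lemma rpow_add_le_add_rpow' {a b p : ℝ} (ha : 0 ≤ a) (hb : 0 ≤ b) (hp : 0 ≤ p) (hp1 : p ≤ 1) :
    (a + b) ^ p ≤ a ^ p + b ^ p := by
  lift a to NNReal using ha
  lift b to NNReal using hb
  exact_mod_cast NNReal.rpow_add_le_add_rpow a b hp hp1

/-- Eventually, `a * log x + C ≤ b * x ^ t` for `b, t > 0`. -/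
lemma ev_log_le (a C b t : ℝ) (hb : 0 < b) (ht : 0 < t) :
    ∀ᶠ x : ℝ in atTop, a * Real.log x + C ≤ b * x ^ t := by
  have h1 : (fun x : ℝ => a * Real.log x) =o[atTop] fun x : ℝ => x ^ t :=
    (isLittleO_log_rpow_atTop ht).const_mul_left a
  have h2 := h1.def (by positivity : (0:ℝ) < b/2)
  have h3 : Tendsto (fun x : ℝ => (b/2) * x ^ t) atTop atTop :=
    (tendsto_rpow_atTop ht).const_mul_atTop (by positivity)
  filter_upwards [h2, h3.eventually_ge_atTop C, eventually_ge_atTop (1:ℝ)] with x hx hx2 hx1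
  have hx0 : (0:ℝ) ≤ x := by linarith
  have hnn : (0:ℝ) ≤ x ^ t := Real.rpow_nonneg hx0 t
  have h4 : a * Real.log x ≤ (b/2) * x ^ t := by
    calc a * Real.log x ≤ ‖a * Real.log x‖ := le_abs_self _
    _ ≤ (b/2) * ‖x ^ t‖ := hx
    _ = (b/2) * x ^ t := by rw [Real.norm_eq_abs, abs_of_nonneg hnn]
  linarith

set_option maxHeartbeats 1000000 in
/-- The main induction: geometric decay of `gam c j`. -/
lemma gam_decay (c : ℝ) (hc : c ∈ Set.Ioo (0:ℝ) 1) (j : ℕ) :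
    ∀ ε > (0:ℝ), ∀ᶠ I : ℤ in atTop,
      gam c j I ≤ Real.exp ((Real.log (1 - c) + ε) * (I:ℝ) ^ ((1:ℝ) / 2 ^ j)) := by
  obtain ⟨hc0, hc1⟩ := hc
  set L := Real.log (1 - c) with hLdef
  have h1c : (0:ℝ) < 1 - c := by linarith
  have hL : L < 0 := Real.log_neg h1c (by linarith)
  induction j with
  | zero =>
    intro ε hε
    filter_upwards [eventually_ge_atTop (1:ℤ)] with I hI
    have : gam c 0 I = 0 := by simp [gam, show ¬ I ≤ 0 by omega]
    rw [this]
    positivity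
  | succ j IH =>
    intro ε hε
    -- reduce to small ε
    set ε' := min ε (-L/2) with hε'def
    have hε'pos : 0 < ε' := lt_min hε (by linarith)
    have hε'le : ε' ≤ ε := min_le_left _ _
    have hε'L : ε' ≤ -L/2 := min_le_right _ _
    suffices h : ∀ᶠ I : ℤ in atTop,
        gam c (j+1) I ≤ Real.exp ((L + ε') * (I:ℝ) ^ ((1:ℝ) / 2 ^ (j+1))) by
      filter_upwards [h, eventually_ge_atTop (1:ℤ)] with I h1 h2
      refine h1.trans (Real.exp_le_exp.2 ?_)
      have hI0 : (0:ℝ) ≤ (I:ℝ) := by exact_mod_cast (by omega : (0:ℤ) ≤ I)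
      have : (0:ℝ) ≤ (I:ℝ) ^ ((1:ℝ) / 2 ^ (j+1)) := Real.rpow_nonneg hI0 _
      nlinarith
    set s := (1:ℝ) / 2 ^ j with hsdef
    set t := (1:ℝ) / 2 ^ (j+1) with htdef
    have h2j : (0:ℝ) < 2 ^ j := by positivity
    have hs : 0 < s := by positivity
    have ht : 0 < t := by positivity
    have hs1 : s ≤ 1 := by
      rw [hsdef, div_le_one h2j]
      exact one_le_pow₀ (by norm_num)
    have hthalf : t ≤ 1/2 := by
      have h2' : (2:ℝ) ≤ 2 ^ (j+1) := by
        rw [pow_succ]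
        nlinarith [one_le_pow₀ (by norm_num : (1:ℝ) ≤ 2) (n := j)]
      rw [htdef]
      exact one_div_le_one_div_of_le two_pos h2'
    have hts : t = s / 2 := by
      rw [htdef, hsdef, pow_succ]
      ring
    have hcoef : L + ε'/4 < 0 := by linarith
    -- IH with ε'/4
    obtain ⟨N₀, hN₀⟩ := eventually_atTop.1 (IH (ε'/4) (by positivity))
    set K : ℝ := ((j:ℝ) + 1) ^ s with hKdef
    have hK0 : 0 ≤ K := Real.rpow_nonneg (by positivity) _
    set B : ℤ := max N₀ 1 + j + 1 with hBdef
    -- analytic eventualities over ℝ, transferred to ℤ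
    have E3 : ∀ᶠ I : ℤ in atTop, -L - Real.log (1/2) ≤ ε' * (I:ℝ) ^ t := by
      have h3 : Tendsto (fun x : ℝ => ε' * x ^ t) atTop atTop :=
        (tendsto_rpow_atTop ht).const_mul_atTop hε'pos
      exact tendsto_intCast_atTop_atTop.eventually (h3.eventually_ge_atTop _)
    have E4 : ∀ᶠ I : ℤ in atTop,
        (1 + (j:ℝ)/2) * Real.log (I:ℝ) + ((-(L + ε'/4)) * K - Real.log (1/2))
          ≤ (3*ε'/4) * (I:ℝ) ^ t :=
      tendsto_intCast_atTop_atTop.eventually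
        (ev_log_le (1 + (j:ℝ)/2) _ (3*ε'/4) t (by positivity) ht)
    filter_upwards [eventually_ge_atTop (max 1 (B^2)), E3, E4] with I hI hE3 hE4
    have hI1 : (1:ℤ) ≤ I := le_trans (le_max_left _ _) hI
    have hIB : (B:ℤ)^2 ≤ I := le_trans (le_max_right _ _) hI
    have hx1 : (1:ℝ) ≤ (I:ℝ) := by exact_mod_cast hI1
    have hx0 : (0:ℝ) < (I:ℝ) := by linarith
    set x : ℝ := (I:ℝ) with hxdef
    -- square root facts
    have hB1 : (1:ℤ) ≤ B := by rw [hBdef]; omega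
    have hB0 : (0:ℝ) ≤ (B:ℝ) := by exact_mod_cast le_trans (by norm_num : (0:ℤ) ≤ 1) hB1
    have hBsqrt : (B:ℝ) ≤ Real.sqrt x := by
      have h' : ((B:ℝ))^2 ≤ x := by rw [hxdef]; exact_mod_cast hIB
      calc (B:ℝ) = Real.sqrt ((B:ℝ)^2) := (Real.sqrt_sq hB0).symm
      _ ≤ Real.sqrt x := Real.sqrt_le_sqrt h'
    have hfloorB : B ≤ ⌊Real.sqrt x⌋ := Int.le_floor.2 hBsqrt
    set m : ℤ := ⌊Real.sqrt x⌋ - j with hmdef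
    have hmN : N₀ ≤ m := by rw [hmdef, hBdef] at *; omega
    have hsqrt_nonneg : (0:ℝ) ≤ Real.sqrt x := Real.sqrt_nonneg x
    have hsqrt_eq : Real.sqrt x = x ^ (1/2 : ℝ) := Real.sqrt_eq_rpow x
    have hjB : ((j:ℝ) + 1) + 1 ≤ (B:ℝ) := by
      have : (j:ℤ) + 2 ≤ B := by rw [hBdef]; omega
      exact_mod_cast this
    have hsub0 : (0:ℝ) ≤ Real.sqrt x - ((j:ℝ) + 1) := by linarith
    have hmge : Real.sqrt x - ((j:ℝ) + 1) ≤ (m:ℝ) := by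
      have hfl : Real.sqrt x - 1 < (⌊Real.sqrt x⌋:ℝ) := Int.sub_one_lt_floor _
      rw [hmdef]
      push_cast
      linarith
    -- key rpow identity : (√x)^s = x^t
    have hsqrt_rpow : (Real.sqrt x) ^ s = x ^ t := by
      rw [hsqrt_eq, ← Real.rpow_mul hx0.le]
      congr 1
      rw [hts]
      ring
    -- subadditivity : x^t ≤ (√x - (j+1))^s + K
    have hsubadd : x ^ t ≤ (Real.sqrt x - ((j:ℝ) + 1)) ^ s + K := by
      have h := rpow_add_le_add_rpow' hsub0 (by positivity : (0:ℝ) ≤ (j:ℝ) + 1) hs.le hs1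
      rw [sub_add_cancel] at h
      rw [← hsqrt_rpow]
      exact h
    have hms : (Real.sqrt x - ((j:ℝ) + 1)) ^ s ≤ (m:ℝ) ^ s :=
      Real.rpow_le_rpow hsub0 hmge hs.le
    have hxt_nonneg : (0:ℝ) ≤ x ^ t := Real.rpow_nonneg hx0.le _
    have hxt_le_sqrt : x ^ t ≤ Real.sqrt x := by
      rw [hsqrt_eq]
      exact Real.rpow_le_rpow_of_exponent_le hx1 hthalf
    -- unfold the recursion
    have hgam : gam c (j+1) I = (1 - c) ^ (Real.sqrt x - 1) +
        x ^ ((1:ℝ) + (j:ℝ)/2) * gam c j m := by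
      rw [gam, if_neg (by omega : ¬ I ≤ 0)]
    rw [hgam]
    have hhalf : Real.exp (Real.log (1/2) + (L + ε') * x ^ t)
        = (1/2) * Real.exp ((L + ε') * x ^ t) := by
      rw [Real.exp_add, Real.exp_log (by norm_num : (0:ℝ) < 1/2)]
    -- term 1
    have hterm1 : (1 - c) ^ (Real.sqrt x - 1)
        ≤ Real.exp (Real.log (1/2) + (L + ε') * x ^ t) := by
      rw [Real.rpow_def_of_pos h1c, ← hLdef, Real.exp_le_exp]
      have hLs : L * Real.sqrt x ≤ L * (x ^ t) :=
        mul_le_mul_of_nonpos_left hxt_le_sqrt hL.le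
      nlinarith
    -- term 2
    have hterm2 : x ^ ((1:ℝ) + (j:ℝ)/2) * gam c j m
        ≤ Real.exp (Real.log (1/2) + (L + ε') * x ^ t) := by
      have hg := hN₀ m hmN
      have hexp : (L + ε'/4) * (m:ℝ) ^ s ≤ (L + ε'/4) * (x ^ t - K) := by
        have h1 : x ^ t - K ≤ (m:ℝ) ^ s := by linarith
        exact mul_le_mul_of_nonpos_left h1 hcoef.le
      have hg2 : gam c j m ≤ Real.exp ((L + ε'/4) * (x ^ t - K)) :=
        hg.trans (Real.exp_le_exp.2 hexp)
      have hxp : (0:ℝ) ≤ x ^ ((1:ℝ) + (j:ℝ)/2) := Real.rpow_nonneg hx0.le _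
      calc x ^ ((1:ℝ) + (j:ℝ)/2) * gam c j m
          ≤ x ^ ((1:ℝ) + (j:ℝ)/2) * Real.exp ((L + ε'/4) * (x ^ t - K)) :=
            mul_le_mul_of_nonneg_left hg2 hxp
        _ = Real.exp (Real.log x * ((1:ℝ) + (j:ℝ)/2) + (L + ε'/4) * (x ^ t - K)) := by
            rw [Real.rpow_def_of_pos hx0, ← Real.exp_add]
        _ ≤ Real.exp (Real.log (1/2) + (L + ε') * x ^ t) := by
            rw [Real.exp_le_exp]
            ring_nf
            ring_nf at hE4
            linarith
    calc (1 - c) ^ (Real.sqrt x - 1) + x ^ ((1:ℝ) + (j:ℝ)/2) * gam c j m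
        ≤ Real.exp (Real.log (1/2) + (L + ε') * x ^ t)
          + Real.exp (Real.log (1/2) + (L + ε') * x ^ t) := add_le_add hterm1 hterm2
      _ = Real.exp ((L + ε') * x ^ t) := by rw [hhalf]; ring

theorem cost_bubble_stmt9 (J : ℕ) (hJ : 1 ≤ J) (c : ℝ) (hc : c ∈ Set.Ioo (0 : ℝ) 1)
    (k : ℕ) (hk : 1 ≤ k) (hkJ : k ≤ J) :
    (∀ ε > (0 : ℝ), ∀ᶠ I : ℕ in atTop,
      gam c (k - 1) (I : ℤ) ≤
        Real.exp ((Real.log (1 - c) + ε) * (I : ℝ) ^ ((1 : ℝ) / (2 : ℝ) ^ (k - 1)))) ∧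
    Real.log (1 - c) < 0 := by
  obtain ⟨hc0, hc1⟩ := hc
  refine ⟨?_, Real.log_neg (by linarith) (by linarith)⟩
  intro ε hε
  have h := gam_decay c ⟨hc0, hc1⟩ (k - 1) ε hε
  have h2 := tendsto_natCast_atTop_atTop (R := ℤ) |>.eventually h
  filter_upwards [h2] with I hI
  convert hI using 3
  rw [Int.cast_natCast]

end
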